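/- Weighted Frobenius-norm summability bound (inequality (5.22) in the proof of Theorem 5.2): let W : ℕ → M_{2n}(ℂ) be a sequence of positive semidefinite matrices, m ≥ 1 an integer, α ≥ 0, and φ₁, …, φ_m : ℕ → ℂ^{2n} sequences such that ∑_{t=0}^{∞} φ_i(t)* W(t) φ_i(t) ≤ α² for each i = 1, …, m. Let Φ(t) denote the 2n×m matrix whose i-th column is φ_i(t). Then ∑_{t=0}^{∞} ‖Φ(t)* W(t) Φ(t)‖_F ≤ m·α², where ‖·‖_F denotes the Frobenius norm (square root of the sum of squared moduli of the entries). -/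

import Mathlib

open Matrix
open scoped ComplexOrder

noncomputable section

/-- The Frobenius norm of a complex matrix: the square root of the sum of the
squared moduli of its entries. -/
def frobNorm {I J : Type*} [Fintype I] [Fintype J] (M : Matrix I J ℂ) : ℝ :=
  Real.sqrt (∑ i, ∑ j, ‖M i j‖ ^ 2)

/-- The `2n × m` matrix whose `i`-th column is `φᵢ(t)`. -/
def colMatrix (n m : ℕ) (φ : Fin m → ℕ → (Fin n ⊕ Fin n → ℂ)) (t : ℕ) :
    Matrix (Fin n ⊕ Fin n) (Fin m) ℂ :=
  Matrix.of fun i j => φ j t i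

lemma dot_cs {ι : Type*} [Fintype ι] (u v : ι → ℂ) :
    ‖star u ⬝ᵥ v‖ ^ 2 ≤ (star u ⬝ᵥ u).re * (star v ⬝ᵥ v).re := by
  let u' : EuclideanSpace ℂ ι := WithLp.toLp 2 u
  let v' : EuclideanSpace ℂ ι := WithLp.toLp 2 v
  have hin : ∀ x y : EuclideanSpace ℂ ι, (inner ℂ x y : ℂ) = star x.ofLp ⬝ᵥ y.ofLp := by
    intro x y
    simp [PiLp.inner_apply, dotProduct, RCLike.inner_apply, mul_comm]
  have h1 : ‖(inner ℂ u' v' : ℂ)‖ ≤ ‖u'‖ * ‖v'‖ := norm_inner_le_norm u' v'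
  have h2 : ((inner ℂ u' u' : ℂ)).re = ‖u'‖ ^ 2 := by
    rw [← @inner_self_eq_norm_sq ℂ]; rfl
  have h3 : ((inner ℂ v' v' : ℂ)).re = ‖v'‖ ^ 2 := by
    rw [← @inner_self_eq_norm_sq ℂ]; rfl
  rw [show u = u'.ofLp from rfl, show v = v'.ofLp from rfl]
  rw [← hin, ← hin, ← hin, h2, h3]
  calc ‖(inner ℂ u' v' : ℂ)‖ ^ 2 ≤ (‖u'‖ * ‖v'‖) ^ 2 :=
        pow_le_pow_left₀ (norm_nonneg _) h1 2
    _ = ‖u'‖ ^ 2 * ‖v'‖ ^ 2 := by ring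

lemma psd_cs {ι : Type*} [Fintype ι] [DecidableEq ι] {W : Matrix ι ι ℂ}
    (hW : W.PosSemidef) (x y : ι → ℂ) :
    ‖star x ⬝ᵥ W.mulVec y‖ ^ 2
      ≤ (star x ⬝ᵥ W.mulVec x).re * (star y ⬝ᵥ W.mulVec y).re := by
  obtain ⟨B, rfl⟩ : ∃ B : Matrix ι ι ℂ, W = Bᴴ * B := by
    open scoped MatrixOrder in
    obtain ⟨X, hX, -, rfl⟩ :=
      CFC.exists_sqrt_of_isSelfAdjoint_of_quasispectrumRestricts hW.isHermitian
        (QuasispectrumRestricts.nnreal_of_nonneg hW.nonneg)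
    exact ⟨X, by rw [← Matrix.star_eq_conjTranspose, hX.star_eq]⟩
  have key : ∀ a b : ι → ℂ,
      star a ⬝ᵥ (Bᴴ * B).mulVec b = star (B.mulVec a) ⬝ᵥ B.mulVec b := by
    intro a b
    rw [← Matrix.mulVec_mulVec, Matrix.dotProduct_mulVec, ← Matrix.star_mulVec]
  rw [key, key, key]
  exact dot_cs _ _

lemma entry_eq (n m : ℕ) (φ : Fin m → ℕ → (Fin n ⊕ Fin n → ℂ)) (t : ℕ)
    (W : Matrix (Fin n ⊕ Fin n) (Fin n ⊕ Fin n) ℂ) (i j : Fin m) :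
    ((colMatrix n m φ t)ᴴ * W * colMatrix n m φ t) i j
      = star (φ i t) ⬝ᵥ W.mulVec (φ j t) := by
  simp only [Matrix.mul_apply, Matrix.conjTranspose_apply, colMatrix, Matrix.of_apply,
    dotProduct, Matrix.mulVec, Pi.star_apply, Finset.sum_mul, Finset.mul_sum]
  rw [Finset.sum_comm]
  apply Finset.sum_congr rfl
  intro k _
  apply Finset.sum_congr rfl
  intro l _
  ring

theorem weighted_frobenius_summability (n m : ℕ) (hn : 0 < n) (hm : 1 ≤ m)
    (W : ℕ → Matrix (Fin n ⊕ Fin n) (Fin n ⊕ Fin n) ℂ)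
    (hW : ∀ t, (W t).PosSemidef)
    (α : ℝ) (hα : 0 ≤ α)
    (φ : Fin m → ℕ → (Fin n ⊕ Fin n → ℂ))
    (hsum : ∀ i : Fin m,
      Summable (fun t => (star (φ i t) ⬝ᵥ (W t).mulVec (φ i t)).re) ∧
      ∑' t : ℕ, (star (φ i t) ⬝ᵥ (W t).mulVec (φ i t)).re ≤ α ^ 2) :
    Summable (fun t => frobNorm ((colMatrix n m φ t)ᴴ * W t * colMatrix n m φ t)) ∧
    ∑' t : ℕ, frobNorm ((colMatrix n m φ t)ᴴ * W t * colMatrix n m φ t)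
      ≤ m * α ^ 2 := by
  set d : ℕ → Fin m → ℝ := fun t i => (star (φ i t) ⬝ᵥ (W t).mulVec (φ i t)).re with hd
  have hdnn : ∀ t i, 0 ≤ d t i := fun t i =>
    (Complex.le_def.mp ((hW t).dotProduct_mulVec_nonneg (φ i t))).1
  set g : ℕ → ℝ := fun t => ∑ i, d t i with hg
  -- pointwise bound: frobNorm ≤ g t
  have hbound : ∀ t, frobNorm ((colMatrix n m φ t)ᴴ * W t * colMatrix n m φ t) ≤ g t := by
    intro t
    have h1 : (∑ i, ∑ j, ‖((colMatrix n m φ t)ᴴ * W t * colMatrix n m φ t) i j‖ ^ 2)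
        ≤ (g t) ^ 2 := by
      have : (g t) ^ 2 = ∑ i : Fin m, ∑ j : Fin m, d t i * d t j := by
        rw [hg]; rw [sq, Finset.sum_mul_sum]
      rw [this]
      apply Finset.sum_le_sum
      intro i _
      apply Finset.sum_le_sum
      intro j _
      rw [entry_eq]
      exact psd_cs (hW t) (φ i t) (φ j t)
    have hgnn : 0 ≤ g t := Finset.sum_nonneg fun i _ => hdnn t i
    calc frobNorm _ ≤ Real.sqrt ((g t) ^ 2) := Real.sqrt_le_sqrt h1
      _ = g t := Real.sqrt_sq hgnn
  have hfnn : ∀ t, 0 ≤ frobNorm ((colMatrix n m φ t)ᴴ * W t * colMatrix n m φ t) :=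
    fun t => Real.sqrt_nonneg _
  have hgsummable : Summable g := by
    apply summable_sum
    intro i _
    exact (hsum i).1
  have hsummable : Summable (fun t => frobNorm ((colMatrix n m φ t)ᴴ * W t * colMatrix n m φ t)) :=
    Summable.of_nonneg_of_le hfnn hbound hgsummable
  refine ⟨hsummable, ?_⟩
  calc ∑' t, frobNorm ((colMatrix n m φ t)ᴴ * W t * colMatrix n m φ t)
      ≤ ∑' t, g t := Summable.tsum_le_tsum hbound hsummable hgsummable
    _ = ∑ i : Fin m, ∑' t, d t i := by
        rw [hg]; exact Summable.tsum_finsetSum fun i _ => (hsum i).1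
    _ ≤ ∑ i : Fin m, α ^ 2 := Finset.sum_le_sum fun i _ => (hsum i).2
    _ = m * α ^ 2 := by simp [Finset.sum_const]
  
end
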